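/- The total (integral of) curvature of a closed C² curve in ℝⁿ is at least 2π (Fenchel's theorem). -/

import Mathlib

open Real intervalIntegral

open scoped RealInnerProductSpace

section Aux

variable {E : Type*} [NormedAddCommGroup E] [InnerProductSpace ℝ E]

private lemma fenchel_inner_bounds {x y : E} (hx : ‖x‖ = 1) (hy : ‖y‖ = 1) :
    -1 ≤ ⟪x, y⟫ ∧ ⟪x, y⟫ ≤ 1 := by
  have h := abs_real_inner_le_norm x y
  rw [hx, hy, mul_one] at h
  exact abs_le.mp h

private lemma fenchel_arccos_antitone {u v : ℝ} (h : u ≤ v) :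
    Real.arccos v ≤ Real.arccos u := by
  simp only [Real.arccos_eq_pi_div_two_sub_arcsin]
  have := Real.monotone_arcsin h
  linarith

/-- Key inner product inequality for the spherical triangle inequality. -/
private lemma fenchel_key_inner {x y z : E} (hx : ‖x‖ = 1) (hy : ‖y‖ = 1) (hz : ‖z‖ = 1) :
    ⟪x, y⟫ * ⟪y, z⟫ - √(1 - ⟪x, y⟫ ^ 2) * √(1 - ⟪y, z⟫ ^ 2) ≤ ⟪x, z⟫ := by
  set c1 := ⟪x, y⟫ with hc1
  set c2 := ⟪y, z⟫ with hc2
  have hb1 := fenchel_inner_bounds hx hy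
  have hb2 := fenchel_inner_bounds hy hz
  have hw2 : ‖x - c1 • y‖ ^ 2 = 1 - c1 ^ 2 := by
    rw [norm_sub_sq_real, real_inner_smul_right, norm_smul, hx, hy, ← hc1, mul_one,
      Real.norm_eq_abs, sq_abs]
    ring
  have hv2 : ‖z - c2 • y‖ ^ 2 = 1 - c2 ^ 2 := by
    rw [norm_sub_sq_real, real_inner_smul_right, norm_smul, hz, hy, ← real_inner_comm z y,
      ← hc2, mul_one, Real.norm_eq_abs, sq_abs]
    ring
  have hwn : ‖x - c1 • y‖ = √(1 - c1 ^ 2) := by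
    rw [← hw2, Real.sqrt_sq (norm_nonneg _)]
  have hvn : ‖z - c2 • y‖ = √(1 - c2 ^ 2) := by
    rw [← hv2, Real.sqrt_sq (norm_nonneg _)]
  have hiv : ⟪x - c1 • y, z - c2 • y⟫ = ⟪x, z⟫ - c1 * c2 := by
    rw [inner_sub_left, inner_sub_right, inner_sub_right, real_inner_smul_left,
      real_inner_smul_left, real_inner_smul_right, real_inner_smul_right,
      real_inner_self_eq_norm_sq, hy]
    rw [← hc1, ← hc2]
    ring
  have habs := abs_real_inner_le_norm (x - c1 • y) (z - c2 • y)
  rw [hiv, hwn, hvn] at habs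
  have := neg_abs_le (⟪x, z⟫ - c1 * c2)
  have h2 := abs_le.mp habs
  linarith [h2.1]

/-- Spherical triangle inequality for the angle `arccos ⟪·,·⟫`. -/
private lemma fenchel_arccos_triangle {x y z : E} (hx : ‖x‖ = 1) (hy : ‖y‖ = 1)
    (hz : ‖z‖ = 1) :
    Real.arccos ⟪x, z⟫ ≤ Real.arccos ⟪x, y⟫ + Real.arccos ⟪y, z⟫ := by
  have hb1 := fenchel_inner_bounds hx hy
  have hb2 := fenchel_inner_bounds hy hz
  set α := Real.arccos ⟪x, y⟫ with hα
  set β := Real.arccos ⟪y, z⟫ with hβ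
  rcases le_or_gt π (α + β) with h | h
  · exact (Real.arccos_le_pi _).trans h
  · have hcos : Real.cos (α + β) ≤ ⟪x, z⟫ := by
      rw [Real.cos_add, hα, hβ, Real.cos_arccos hb1.1 hb1.2, Real.cos_arccos hb2.1 hb2.2,
        Real.sin_arccos, Real.sin_arccos]
      exact fenchel_key_inner hx hy hz
    have h0 : 0 ≤ α + β := add_nonneg (Real.arccos_nonneg _) (Real.arccos_nonneg _)
    calc Real.arccos ⟪x, z⟫ ≤ Real.arccos (Real.cos (α + β)) :=
          fenchel_arccos_antitone hcos
      _ = α + β := Real.arccos_cos h0 h.le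

private lemma fenchel_polygon {f : ℕ → E} (hf : ∀ i, ‖f i‖ = 1) (N : ℕ) :
    Real.arccos ⟪f 0, f N⟫ ≤ ∑ i ∈ Finset.range N, Real.arccos ⟪f i, f (i + 1)⟫ := by
  induction N with
  | zero =>
    simp [real_inner_self_eq_norm_sq, hf 0, Real.arccos_one]
  | succ N ih =>
    rw [Finset.sum_range_succ]
    exact (fenchel_arccos_triangle (hf 0) (hf N) (hf (N + 1))).trans
      (add_le_add_left ih _)

private lemma fenchel_arcsin_aux {t : ℝ} (h0 : 0 ≤ t) (h1 : t ≤ 1) :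
    Real.arcsin t * √(1 - t ^ 2) ≤ t := by
  rcases eq_or_lt_of_le h0 with rfl | ht
  · simp
  · have hθ0 : 0 < Real.arcsin t := Real.arcsin_pos.mpr ht
    rcases eq_or_lt_of_le (Real.arcsin_le_pi_div_two t) with heq | hlt
    · rw [← Real.cos_arcsin, heq, Real.cos_pi_div_two, mul_zero]
      exact h0
    · have hc : 0 < Real.cos (Real.arcsin t) :=
        Real.cos_pos_of_mem_Ioo ⟨by linarith [Real.pi_pos], hlt⟩
      have htan := Real.lt_tan hθ0 hlt
      rw [Real.tan_eq_sin_div_cos] at htan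
      have hs : Real.sin (Real.arcsin t) = t := Real.sin_arcsin (by linarith) h1
      rw [← Real.cos_arcsin]
      calc Real.arcsin t * Real.cos (Real.arcsin t)
          ≤ Real.sin (Real.arcsin t) / Real.cos (Real.arcsin t) * Real.cos (Real.arcsin t) := by
            apply mul_le_mul_of_nonneg_right htan.le hc.le
        _ = t := by rw [div_mul_cancel₀ _ hc.ne', hs]

private lemma fenchel_arccos_eq_two_arcsin {x y : E} (hx : ‖x‖ = 1) (hy : ‖y‖ = 1) :
    Real.arccos ⟪x, y⟫ = 2 * Real.arcsin (‖x - y‖ / 2) := by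
  have hns : ‖x - y‖ ^ 2 = 2 - 2 * ⟪x, y⟫ := by
    rw [norm_sub_sq_real, hx, hy]; ring
  set t := ‖x - y‖ / 2 with htdef
  have ht0 : 0 ≤ t := by positivity
  have ht2 : ‖x - y‖ ≤ 2 := by
    calc ‖x - y‖ ≤ ‖x‖ + ‖y‖ := norm_sub_le x y
      _ = 2 := by rw [hx, hy]; norm_num
  have ht1 : t ≤ 1 := by rw [htdef]; linarith
  have hinner : ⟪x, y⟫ = 1 - 2 * t ^ 2 := by
    have h4 : t ^ 2 = ‖x - y‖ ^ 2 / 4 := by rw [htdef]; ring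
    rw [h4]; linarith
  have hsin : Real.sin (Real.arcsin t) = t := Real.sin_arcsin (by linarith) ht1
  have hcos : Real.cos (2 * Real.arcsin t) = 1 - 2 * t ^ 2 := by
    rw [Real.cos_two_mul]
    have hpy := Real.sin_sq_add_cos_sq (Real.arcsin t)
    nlinarith [hsin]
  rw [hinner, ← hcos, Real.arccos_cos
    (by have := Real.arcsin_nonneg.mpr ht0; linarith) (by linarith [Real.arcsin_le_pi_div_two t])]

private lemma fenchel_edge_bound {x y : E} (hx : ‖x‖ = 1) (hy : ‖y‖ = 1) {δ : ℝ}
    (hd : ‖x - y‖ ≤ δ) :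
    Real.arccos ⟪x, y⟫ * √(1 - (δ / 2) ^ 2) ≤ ‖x - y‖ := by
  rw [fenchel_arccos_eq_two_arcsin hx hy]
  set t := ‖x - y‖ / 2 with htdef
  have ht0 : 0 ≤ t := by positivity
  have ht2 : ‖x - y‖ ≤ 2 := by
    calc ‖x - y‖ ≤ ‖x‖ + ‖y‖ := norm_sub_le x y
      _ = 2 := by rw [hx, hy]; norm_num
  have ht1 : t ≤ 1 := by rw [htdef]; linarith
  have htδ : t ≤ δ / 2 := by rw [htdef]; linarith
  have hasn : 0 ≤ Real.arcsin t := Real.arcsin_nonneg.mpr ht0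
  have hsq : √(1 - (δ / 2) ^ 2) ≤ √(1 - t ^ 2) :=
    Real.sqrt_le_sqrt (by nlinarith)
  have haux := fenchel_arcsin_aux ht0 ht1
  calc 2 * Real.arcsin t * √(1 - (δ / 2) ^ 2)
      ≤ 2 * Real.arcsin t * √(1 - t ^ 2) := by
        apply mul_le_mul_of_nonneg_left hsq (by linarith)
    _ ≤ 2 * t := by nlinarith
    _ = ‖x - y‖ := by rw [htdef]; ring

end Aux

open MeasureTheory Filter in
private lemma fenchel_angle_le_integral {E : Type*} [NormedAddCommGroup E]
    [InnerProductSpace ℝ E] [CompleteSpace E]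
    {T : ℝ → E} (hT : Differentiable ℝ T) (hT' : Continuous (deriv T))
    (hu : ∀ s, ‖T s‖ = 1) {a b : ℝ} (hab : a ≤ b) :
    Real.arccos ⟪T a, T b⟫ ≤ ∫ s in a..b, ‖deriv T s‖ := by
  obtain ⟨M, hM⟩ := isCompact_Icc.exists_bound_of_continuousOn
    (s := Set.Icc a b) hT'.continuousOn
  have hM0 : 0 ≤ M := le_trans (norm_nonneg _) (hM a ⟨le_refl a, hab⟩)
  have hint : ∀ c d : ℝ, IntervalIntegrable (fun s => ‖deriv T s‖) volume c d :=
    fun c d => (hT'.norm).intervalIntegrable _ _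
  have key : ∀ N : ℕ, 1 ≤ N →
      Real.arccos ⟪T a, T b⟫ * √(1 - (M * (b - a) / N / 2) ^ 2) ≤
        ∫ s in a..b, ‖deriv T s‖ := by
    intro N hN
    have hNpos : (0 : ℝ) < N := by exact_mod_cast hN
    set δ : ℝ := M * (b - a) / N with hδ
    set sp : ℕ → ℝ := fun i => a + i * ((b - a) / N) with hsp
    have hsp0 : sp 0 = a := by simp [hsp]
    have hspN : sp N = b := by
      simp only [hsp]
      field_simp
      ring
    have hstep : ∀ i : ℕ, sp (i + 1) - sp i = (b - a) / N := by
      intro i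
      simp only [hsp, Nat.cast_add, Nat.cast_one]
      ring
    have hdiv0 : 0 ≤ (b - a) / N := div_nonneg (by linarith) hNpos.le
    have hmono : ∀ i : ℕ, sp i ≤ sp (i + 1) := by
      intro i
      simp only [hsp]
      push_cast
      nlinarith [hdiv0]
    have hmem : ∀ i : ℕ, i ≤ N → sp i ∈ Set.Icc a b := by
      intro i hi
      have hiN : (i : ℝ) ≤ N := by exact_mod_cast hi
      have h1 : 0 ≤ (i : ℝ) * ((b - a) / N) := mul_nonneg (Nat.cast_nonneg i) hdiv0
      have h2 : (i : ℝ) * ((b - a) / N) ≤ (N : ℝ) * ((b - a) / N) :=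
        mul_le_mul_of_nonneg_right hiN hdiv0
      have h3 : (N : ℝ) * ((b - a) / N) = b - a := by field_simp
      constructor
      · simp only [hsp]; linarith
      · simp only [hsp]; linarith
    have hell : ∀ i : ℕ, i < N → (∫ s in sp i..sp (i + 1), ‖deriv T s‖) ≤ δ := by
      intro i hi
      have hle : ∀ x ∈ Set.Icc (sp i) (sp (i + 1)), ‖deriv T x‖ ≤ M := by
        intro x hx
        have h1 := (hmem i hi.le).1
        have h2 := (hmem (i + 1) hi).2
        exact hM x ⟨le_trans h1 hx.1, le_trans hx.2 h2⟩
      have h1 : (∫ s in sp i..sp (i + 1), ‖deriv T s‖) ≤ ∫ _ in sp i..sp (i + 1), M :=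
        intervalIntegral.integral_mono_on (hmono i) (hint _ _)
          intervalIntegrable_const hle
      rw [intervalIntegral.integral_const, smul_eq_mul, hstep i] at h1
      calc (∫ s in sp i..sp (i + 1), ‖deriv T s‖) ≤ (b - a) / N * M := h1
        _ = δ := by rw [hδ]; ring
    have hchord : ∀ i : ℕ, i < N →
        ‖T (sp i) - T (sp (i + 1))‖ ≤ ∫ s in sp i..sp (i + 1), ‖deriv T s‖ := by
      intro i hi
      have hftc : (∫ s in sp i..sp (i + 1), deriv T s) = T (sp (i + 1)) - T (sp i) :=
        intervalIntegral.integral_deriv_eq_sub (fun x _ => hT.differentiableAt)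
          (hT'.intervalIntegrable _ _)
      rw [norm_sub_rev, ← hftc]
      exact intervalIntegral.norm_integral_le_integral_norm (hmono i)
    have hedge : ∀ i : ℕ, i < N →
        Real.arccos ⟪T (sp i), T (sp (i + 1))⟫ * √(1 - (δ / 2) ^ 2) ≤
          ∫ s in sp i..sp (i + 1), ‖deriv T s‖ := by
      intro i hi
      have hd : ‖T (sp i) - T (sp (i + 1))‖ ≤ δ := (hchord i hi).trans (hell i hi)
      exact (fenchel_edge_bound (hu _) (hu _) hd).trans (hchord i hi)
    have hpoly := fenchel_polygon (f := fun i => T (sp i)) (fun i => hu _) N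
    simp only [hsp0, hspN] at hpoly
    have hsum : (∑ i ∈ Finset.range N, ∫ s in sp i..sp (i + 1), ‖deriv T s‖) =
        ∫ s in a..b, ‖deriv T s‖ := by
      rw [← hsp0, ← hspN]
      exact intervalIntegral.sum_integral_adjacent_intervals fun k _ => hint _ _
    have hsqrt0 : (0 : ℝ) ≤ √(1 - (δ / 2) ^ 2) := Real.sqrt_nonneg _
    calc Real.arccos ⟪T a, T b⟫ * √(1 - (δ / 2) ^ 2)
        ≤ (∑ i ∈ Finset.range N, Real.arccos ⟪T (sp i), T (sp (i + 1))⟫) *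
            √(1 - (δ / 2) ^ 2) := mul_le_mul_of_nonneg_right hpoly hsqrt0
      _ = ∑ i ∈ Finset.range N,
            Real.arccos ⟪T (sp i), T (sp (i + 1))⟫ * √(1 - (δ / 2) ^ 2) :=
          Finset.sum_mul _ _ _
      _ ≤ ∑ i ∈ Finset.range N, ∫ s in sp i..sp (i + 1), ‖deriv T s‖ :=
          Finset.sum_le_sum fun i hi => hedge i (Finset.mem_range.mp hi)
      _ = ∫ s in a..b, ‖deriv T s‖ := hsum
  have hx : Tendsto (fun N : ℕ => M * (b - a) / N) atTop (nhds 0) := by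
    have h1 := tendsto_one_div_atTop_nhds_zero_nat.const_mul (M * (b - a))
    rw [mul_zero] at h1
    refine h1.congr fun N => ?_
    rw [one_div, div_eq_mul_inv]
  have hlim : Tendsto (fun N : ℕ =>
      Real.arccos ⟪T a, T b⟫ * √(1 - (M * (b - a) / N / 2) ^ 2)) atTop
      (nhds (Real.arccos ⟪T a, T b⟫)) := by
    have h2 : Tendsto (fun N : ℕ => 1 - (M * (b - a) / N / 2) ^ 2) atTop (nhds 1) := by
      have h3 := hx.div_const 2
      rw [zero_div] at h3
      have h4 := h3.mul h3
      rw [mul_zero] at h4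
      have h5 : Tendsto (fun N : ℕ =>
          1 - M * (b - a) / N / 2 * (M * (b - a) / N / 2)) atTop (nhds (1 - 0)) :=
        tendsto_const_nhds.sub h4
      rw [sub_zero] at h5
      refine h5.congr fun N => ?_
      ring
    have h6 := h2.sqrt
    rw [Real.sqrt_one] at h6
    have h7 : Tendsto (fun N : ℕ =>
        Real.arccos ⟪T a, T b⟫ * √(1 - (M * (b - a) / N / 2) ^ 2)) atTop
        (nhds (Real.arccos ⟪T a, T b⟫ * 1)) := tendsto_const_nhds.mul h6
    rw [mul_one] at h7
    exact h7
  exact le_of_tendsto hlim (eventually_atTop.mpr ⟨1, key⟩)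

/-- Fenchel's theorem: the total curvature `∫₀^L |γ''(s)| ds` of a closed `C²` curve in
`ℝⁿ`, parametrized by arc length with length `L`, is at least `2π`. -/
theorem stmt_15 (n : ℕ) (γ : ℝ → EuclideanSpace ℝ (Fin n)) (L : ℝ)
    (hL : 0 < L) (hsm : ContDiff ℝ 2 γ)
    (hper : Function.Periodic γ L)
    (hunit : ∀ s, ‖deriv γ s‖ = 1) :
    2 * Real.pi ≤ ∫ s in (0:ℝ)..L, ‖deriv (deriv γ) s‖ := by
  have hsm' : ContDiff ℝ (1 + 1) γ := by
    rw [show ((1 : WithTop ℕ∞) + 1) = 2 by norm_num]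
    exact hsm
  have hγdiff : Differentiable ℝ γ := (contDiff_succ_iff_deriv.mp hsm').1
  have hT1 : ContDiff ℝ 1 (deriv γ) := (contDiff_succ_iff_deriv.mp hsm').2.2
  have hTdiff : Differentiable ℝ (deriv γ) := (contDiff_one_iff_deriv.mp hT1).1
  have hT'cont : Continuous (deriv (deriv γ)) := (contDiff_one_iff_deriv.mp hT1).2
  have hTcont : Continuous (deriv γ) := hTdiff.continuous
  set T : ℝ → EuclideanSpace ℝ (Fin n) := deriv γ with hTdef
  -- `T L = T 0`
  have hTper : T L = T 0 := by
    have hfun : (fun x => γ (x + L)) = γ := funext hper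
    calc T L = deriv γ (0 + L) := by rw [zero_add]
      _ = deriv (fun x => γ (x + L)) 0 := (deriv_comp_add_const γ L 0).symm
      _ = T 0 := by rw [hfun]
  by_contra hcon
  push_neg at hcon
  set K : ℝ := ∫ s in (0:ℝ)..L, ‖deriv T s‖ with hKdef
  have hint : ∀ c d : ℝ, IntervalIntegrable (fun s => ‖deriv T s‖) MeasureTheory.volume c d :=
    fun c d => (hT'cont.norm).intervalIntegrable _ _
  have hK0 : 0 ≤ K := intervalIntegral.integral_nonneg hL.le fun u _ => norm_nonneg _
  -- choose the bisecting point b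
  have hσcont : Continuous fun s => ∫ t in (0:ℝ)..s, ‖deriv T t‖ :=
    intervalIntegral.continuous_primitive (fun a b => hint a b) 0
  obtain ⟨b, hbmem, hb⟩ : ∃ b ∈ Set.Icc (0:ℝ) L, (∫ t in (0:ℝ)..b, ‖deriv T t‖) = K / 2 := by
    have hIVT := intermediate_value_Icc hL.le hσcont.continuousOn
    have hmem : K / 2 ∈ Set.Icc ((∫ t in (0:ℝ)..(0:ℝ), ‖deriv T t‖))
        (∫ t in (0:ℝ)..L, ‖deriv T t‖) := by
      rw [intervalIntegral.integral_same]
      exact ⟨by linarith, by rw [← hKdef]; linarith⟩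
    obtain ⟨b, hb1, hb2⟩ := hIVT hmem
    exact ⟨b, hb1, hb2⟩
  have hsplit : (∫ t in (0:ℝ)..b, ‖deriv T t‖) + (∫ t in b..L, ‖deriv T t‖) = K :=
    intervalIntegral.integral_add_adjacent_intervals (hint _ _) (hint _ _)
  have hb2 : (∫ t in b..L, ‖deriv T t‖) = K / 2 := by linarith
  set p := T 0 with hpdef
  set q := T b with hqdef
  -- positivity of the inner product with `p + q`
  have hpos : ∀ s ∈ Set.Icc (0:ℝ) L, 0 < ⟪T s, p + q⟫ := by
    intro s hs
    have hb1' : -1 ≤ ⟪T s, p⟫ ∧ ⟪T s, p⟫ ≤ 1 := fenchel_inner_bounds (hunit s) (hunit 0)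
    have hb2' : -1 ≤ ⟪T s, q⟫ ∧ ⟪T s, q⟫ ≤ 1 := fenchel_inner_bounds (hunit s) (hunit b)
    have hπ : Real.arccos ⟪T s, p⟫ + Real.arccos ⟪T s, q⟫ < π := by
      rcases le_or_gt s b with hsb | hbs
      · -- s ∈ [0, b]
        have h1 : Real.arccos ⟪T 0, T s⟫ ≤ ∫ t in (0:ℝ)..s, ‖deriv T t‖ :=
          fenchel_angle_le_integral hTdiff hT'cont hunit hs.1
        have h2 : Real.arccos ⟪T s, T b⟫ ≤ ∫ t in s..b, ‖deriv T t‖ :=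
          fenchel_angle_le_integral hTdiff hT'cont hunit hsb
        have hadd : (∫ t in (0:ℝ)..s, ‖deriv T t‖) + (∫ t in s..b, ‖deriv T t‖) = K / 2 := by
          rw [intervalIntegral.integral_add_adjacent_intervals (hint _ _) (hint _ _), hb]
        have hcomm : ⟪T 0, T s⟫ = ⟪T s, p⟫ := real_inner_comm _ _
        rw [hcomm] at h1
        have : Real.arccos ⟪T s, p⟫ + Real.arccos ⟪T s, q⟫ ≤ K / 2 := by
          rw [hqdef]; linarith
        linarith [Real.pi_pos, hcon]
      · -- s ∈ [b, L]
        have h1 : Real.arccos ⟪T b, T s⟫ ≤ ∫ t in b..s, ‖deriv T t‖ :=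
          fenchel_angle_le_integral hTdiff hT'cont hunit hbs.le
        have h2 : Real.arccos ⟪T s, T L⟫ ≤ ∫ t in s..L, ‖deriv T t‖ :=
          fenchel_angle_le_integral hTdiff hT'cont hunit hs.2
        have hadd : (∫ t in b..s, ‖deriv T t‖) + (∫ t in s..L, ‖deriv T t‖) = K / 2 := by
          rw [intervalIntegral.integral_add_adjacent_intervals (hint _ _) (hint _ _), hb2]
        have hcomm : ⟪T b, T s⟫ = ⟪T s, q⟫ := real_inner_comm _ _
        rw [hcomm] at h1
        rw [hTper] at h2
        have : Real.arccos ⟪T s, q⟫ + Real.arccos ⟪T s, p⟫ ≤ K / 2 := by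
          rw [hpdef]; linarith
        linarith [Real.pi_pos, hcon]
    -- conclude positivity
    have hcosp : Real.cos (Real.arccos ⟪T s, p⟫) = ⟪T s, p⟫ :=
      Real.cos_arccos hb1'.1 hb1'.2
    have hcosq : Real.cos (Real.arccos ⟪T s, q⟫) = ⟪T s, q⟫ :=
      Real.cos_arccos hb2'.1 hb2'.2
    have hlt : Real.cos (π - Real.arccos ⟪T s, q⟫) < Real.cos (Real.arccos ⟪T s, p⟫) :=
      Real.cos_lt_cos_of_nonneg_of_le_pi (Real.arccos_nonneg _)
        (by linarith [Real.arccos_nonneg ⟪T s, q⟫]) (by linarith)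
    rw [Real.cos_pi_sub, hcosp, hcosq] at hlt
    rw [inner_add_right]
    linarith
  -- the integral of `⟪T s, p + q⟫` is zero yet positive
  have hTint : (∫ s in (0:ℝ)..L, T s) = 0 := by
    have hftc : (∫ s in (0:ℝ)..L, deriv γ s) = γ L - γ 0 :=
      intervalIntegral.integral_deriv_eq_sub (fun x _ => hγdiff.differentiableAt)
        (hTcont.intervalIntegrable _ _)
    have hγL : γ L = γ 0 := by
      have := hper 0
      rwa [zero_add] at this
    rw [hTdef, hftc, hγL, sub_self]
  have hI0 : (∫ s in (0:ℝ)..L, ⟪T s, p + q⟫) = 0 := by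
    have hcomm : ∀ s, ⟪T s, p + q⟫ = (innerSL ℝ (p + q)) (T s) := by
      intro s
      rw [innerSL_apply_apply, real_inner_comm]
    calc (∫ s in (0:ℝ)..L, ⟪T s, p + q⟫)
        = ∫ s in (0:ℝ)..L, (innerSL ℝ (p + q)) (T s) := by
          simp_rw [hcomm]
      _ = (innerSL ℝ (p + q)) (∫ s in (0:ℝ)..L, T s) :=
          ContinuousLinearMap.intervalIntegral_comp_comm _
            (hTcont.intervalIntegrable _ _)
      _ = 0 := by rw [hTint, map_zero]
  have hIpos : 0 < ∫ s in (0:ℝ)..L, ⟪T s, p + q⟫ := by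
    apply intervalIntegral.intervalIntegral_pos_of_pos_on
    · exact (hTcont.inner continuous_const).intervalIntegrable _ _
    · intro x hx
      exact hpos x ⟨hx.1.le, hx.2.le⟩
    · exact hL
  linarith
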